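/- Let a > 0, b > 0 and let γ be Gamma-distributed with shape b and rate a. Then p^b · E[Q(√(p γ))] → (1/(2√π)) (2a)^b Γ(1/2 + b)/Γ(1 + b) as p → ∞. In particular, E[Q(√(pγ))] ~ C p^{-b} for an explicit constant C. -/

import Mathlib

open MeasureTheory Real Filter

open Set Topology

/-- The Gaussian Q-function. -/
noncomputable def gaussQ (x : ℝ) : ℝ :=
  (Real.sqrt (2 * Real.pi))⁻¹ * ∫ t in Set.Ioi x, Real.exp (-t ^ 2 / 2)

lemma integrable_g2 : Integrable (fun t : ℝ => Real.exp (-t ^ 2 / 2)) := by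
  have h := integrable_exp_neg_mul_sq (by norm_num : (0:ℝ) < 1/2)
  have : (fun t : ℝ => Real.exp (-t ^ 2 / 2)) = fun t : ℝ => Real.exp (-(1/2) * t ^ 2) := by
    funext t; congr 1; ring
  rw [this]; exact h

lemma integral_Ioi_split (y : ℝ) :
    (∫ t in Set.Ioi y, Real.exp (-t ^ 2 / 2)) =
      (∫ t in Set.Ioi (0:ℝ), Real.exp (-t ^ 2 / 2)) - ∫ t in (0:ℝ)..y, Real.exp (-t ^ 2 / 2) := by
  have hf := integrable_g2
  rcases le_total 0 y with h | h
  · rw [intervalIntegral.integral_of_le h, ← Set.Ioc_union_Ioi_eq_Ioi h,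
      setIntegral_union (Set.Ioc_disjoint_Ioi le_rfl) measurableSet_Ioi hf.integrableOn
        hf.integrableOn]
    ring
  · rw [intervalIntegral.integral_of_ge h, ← Set.Ioc_union_Ioi_eq_Ioi h,
      setIntegral_union (Set.Ioc_disjoint_Ioi le_rfl) measurableSet_Ioi hf.integrableOn
        hf.integrableOn]
    ring

lemma gaussQ_hasDerivAt (x : ℝ) :
    HasDerivAt gaussQ (-((Real.sqrt (2 * Real.pi))⁻¹ * Real.exp (-x ^ 2 / 2))) x := by
  have hf := integrable_g2
  have hcont : Continuous fun t : ℝ => Real.exp (-t ^ 2 / 2) := by fun_prop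
  have hd : HasDerivAt (fun u : ℝ => ∫ t in (0:ℝ)..u, Real.exp (-t ^ 2 / 2))
      (Real.exp (-x ^ 2 / 2)) x :=
    intervalIntegral.integral_hasDerivAt_right hf.intervalIntegrable
      (hcont.stronglyMeasurableAtFilter _ _) hcont.continuousAt
  have hfun : gaussQ = fun u : ℝ => (Real.sqrt (2 * Real.pi))⁻¹ *
      ((∫ t in Set.Ioi (0:ℝ), Real.exp (-t ^ 2 / 2)) - ∫ t in (0:ℝ)..u, Real.exp (-t ^ 2 / 2)) := by
    funext u; rw [gaussQ, integral_Ioi_split]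
  rw [hfun]
  have := ((hasDerivAt_const x (∫ t in Set.Ioi (0:ℝ), Real.exp (-t ^ 2 / 2))).sub hd).const_mul
    (Real.sqrt (2 * Real.pi))⁻¹
  exact this.congr_deriv (by ring)

lemma gaussQ_continuous : Continuous gaussQ :=
  continuous_iff_continuousAt.2 fun x => (gaussQ_hasDerivAt x).continuousAt

lemma gaussQ_nonneg (x : ℝ) : 0 ≤ gaussQ x :=
  mul_nonneg (inv_nonneg.2 (Real.sqrt_nonneg _))
    (setIntegral_nonneg measurableSet_Ioi fun t _ => (Real.exp_pos _).le)

lemma gaussQ_le {x : ℝ} (hx : 0 ≤ x) : gaussQ x ≤ 2 * Real.exp (-x ^ 2 / 4) := by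
  have hint2 : Integrable (fun t : ℝ => Real.exp (-(1/4) * t ^ 2)) :=
    integrable_exp_neg_mul_sq (by norm_num)
  have h1 : (∫ t in Set.Ioi x, Real.exp (-t ^ 2 / 2)) ≤
      ∫ t in Set.Ioi x, Real.exp (-x ^ 2 / 4) * Real.exp (-(1/4) * t ^ 2) := by
    refine setIntegral_mono_on integrable_g2.integrableOn
      ((hint2.integrableOn).const_mul _) measurableSet_Ioi fun t ht => ?_
    rw [← Real.exp_add]
    apply Real.exp_le_exp.2
    have ht' : x ≤ t := le_of_lt ht
    nlinarith
  have h2 : (∫ t in Set.Ioi x, Real.exp (-x ^ 2 / 4) * Real.exp (-(1/4) * t ^ 2)) =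
      Real.exp (-x ^ 2 / 4) * ∫ t in Set.Ioi x, Real.exp (-(1/4) * t ^ 2) := by
    rw [integral_const_mul]
  have h3 : (∫ t in Set.Ioi x, Real.exp (-(1/4) * t ^ 2)) ≤ ∫ t : ℝ, Real.exp (-(1/4) * t ^ 2) :=
    setIntegral_le_integral hint2 (Filter.Eventually.of_forall fun t => (Real.exp_pos _).le)
  have h4 : (∫ t : ℝ, Real.exp (-(1/4) * t ^ 2)) = 2 * Real.sqrt Real.pi := by
    rw [integral_gaussian]
    rw [show Real.pi / (1/4) = 4 * Real.pi by ring, Real.sqrt_mul (by norm_num),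
      show (4:ℝ) = 2 ^ 2 by norm_num, Real.sqrt_sq (by norm_num)]
  have hc : (Real.sqrt (2 * Real.pi))⁻¹ * (2 * Real.sqrt Real.pi) ≤ 2 := by
    rw [Real.sqrt_mul (by norm_num)]
    have hπ : 0 < Real.sqrt Real.pi := Real.sqrt_pos.2 Real.pi_pos
    have h2' : 1 ≤ Real.sqrt 2 := by
      nlinarith [Real.sq_sqrt (by norm_num : (0:ℝ) ≤ 2), Real.sqrt_nonneg 2]
    rw [mul_inv]
    have hs2 : 0 < Real.sqrt 2 := by linarith
    calc (Real.sqrt 2)⁻¹ * (Real.sqrt Real.pi)⁻¹ * (2 * Real.sqrt Real.pi)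
        = 2 * (Real.sqrt 2)⁻¹ := by
          field_simp
      _ ≤ 2 * 1 := by
          have : (Real.sqrt 2)⁻¹ ≤ 1 := by
            rw [inv_le_one_iff₀]; right; exact h2'
          nlinarith
      _ = 2 := by ring
  have hQ : gaussQ x ≤ (Real.sqrt (2 * Real.pi))⁻¹ * (Real.exp (-x ^ 2 / 4) * (2 * Real.sqrt Real.pi)) := by
    rw [gaussQ]
    refine mul_le_mul_of_nonneg_left ?_ (inv_nonneg.2 (Real.sqrt_nonneg _))
    calc (∫ t in Set.Ioi x, Real.exp (-t ^ 2 / 2))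
        ≤ Real.exp (-x ^ 2 / 4) * ∫ t in Set.Ioi x, Real.exp (-(1/4) * t ^ 2) := by rw [← h2]; exact h1
      _ ≤ Real.exp (-x ^ 2 / 4) * (2 * Real.sqrt Real.pi) := by
          rw [← h4] at *
          exact mul_le_mul_of_nonneg_left h3 (Real.exp_pos _).le
  calc gaussQ x ≤ (Real.sqrt (2 * Real.pi))⁻¹ * (Real.exp (-x ^ 2 / 4) * (2 * Real.sqrt Real.pi)) := hQ
    _ = ((Real.sqrt (2 * Real.pi))⁻¹ * (2 * Real.sqrt Real.pi)) * Real.exp (-x ^ 2 / 4) := by ring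
    _ ≤ 2 * Real.exp (-x ^ 2 / 4) := by
        exact mul_le_mul_of_nonneg_right hc (Real.exp_pos _).le

lemma gaussQ_sqrt_le {y : ℝ} (hy : 0 ≤ y) : gaussQ (Real.sqrt y) ≤ 2 * Real.exp (-(1/4) * y) := by
  have := gaussQ_le (Real.sqrt_nonneg y)
  rwa [Real.sq_sqrt hy, show -y/4 = -(1/4)*y by ring] at this

lemma int_gamma {q r : ℝ} (hq : -1 < q) (hr : 0 < r) :
    ∫ x in Set.Ioi (0:ℝ), x ^ q * Real.exp (-(r * x)) = r ^ (-(q+1)) * Real.Gamma (q+1) := by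
  have h := integral_rpow_mul_exp_neg_mul_rpow one_pos hq hr
  simp only [Real.rpow_one, neg_mul, div_one, one_mul, mul_one] at h
  rw [h]

lemma int_gamma_integrable {q r : ℝ} (hq : -1 < q) (hr : 0 < r) :
    IntegrableOn (fun x : ℝ => x ^ q * Real.exp (-(r * x))) (Set.Ioi 0) := by
  have h := integrableOn_rpow_mul_exp_neg_mul_rpow hq one_pos hr
  simpa [Real.rpow_one, neg_mul] using h

lemma Ig {b : ℝ} (hb : 0 < b) :
    IntegrableOn (fun y : ℝ => gaussQ (Real.sqrt y) * y ^ (b-1)) (Set.Ioi 0) := by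
  have hbound : IntegrableOn (fun y : ℝ => 2 * (y ^ (b-1) * Real.exp (-(1/4 * y)))) (Set.Ioi 0) :=
    (int_gamma_integrable (by linarith) (by norm_num)).const_mul 2
  refine Integrable.mono' hbound ?_ ?_
  · refine (ContinuousOn.mul ?_ ?_).aestronglyMeasurable measurableSet_Ioi
    · exact (gaussQ_continuous.comp Real.continuous_sqrt).continuousOn
    · exact fun y hy =>
        (Real.continuousAt_rpow_const y (b-1) (Or.inl (ne_of_gt hy))).continuousWithinAt
  · filter_upwards [ae_restrict_mem measurableSet_Ioi] with y hy
    have hy' : (0:ℝ) < y := hy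
    rw [Real.norm_eq_abs,
      abs_of_nonneg (mul_nonneg (gaussQ_nonneg _) (Real.rpow_nonneg hy'.le _))]
    calc gaussQ (Real.sqrt y) * y ^ (b-1)
        ≤ (2 * Real.exp (-(1/4) * y)) * y ^ (b-1) :=
          mul_le_mul_of_nonneg_right (gaussQ_sqrt_le hy'.le) (Real.rpow_nonneg hy'.le _)
      _ = 2 * (y ^ (b-1) * Real.exp (-(1/4 * y))) := by
          rw [show -(1/4:ℝ) * y = -(1/4 * y) by ring]; ring

lemma J_val {b : ℝ} (hb : 0 < b) :
    ∫ y in Set.Ioi (0:ℝ), gaussQ (Real.sqrt y) * y ^ (b-1) =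
      (Real.sqrt (2 * Real.pi))⁻¹ / (2*b) *
        ((1/2:ℝ) ^ (-(b - 1/2 + 1)) * Real.Gamma (b - 1/2 + 1)) := by
  set c := (Real.sqrt (2 * Real.pi))⁻¹ with hcdef
  set φ := fun y : ℝ => gaussQ (Real.sqrt y) * y ^ (b-1) -
    c/(2*b) * (y ^ (b - 1/2) * Real.exp (-(1/2 * y))) with hφdef
  have hint2 : IntegrableOn
      (fun y : ℝ => c/(2*b) * (y ^ (b - 1/2) * Real.exp (-(1/2 * y)))) (Set.Ioi 0) :=
    ((int_gamma_integrable (by linarith) (by norm_num)).const_mul _)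
  have hIg := Ig hb
  have hderiv : ∀ y ∈ Set.Ioi (0:ℝ),
      HasDerivAt (fun y : ℝ => gaussQ (Real.sqrt y) * y ^ b / b) (φ y) y := by
    intro y hy
    have hy' : (0:ℝ) < y := hy
    have h1 : HasDerivAt (fun y : ℝ => gaussQ (Real.sqrt y))
        (-(c * Real.exp (-(Real.sqrt y) ^ 2 / 2)) * (1/(2 * Real.sqrt y))) y :=
      (gaussQ_hasDerivAt (Real.sqrt y)).comp y (Real.hasDerivAt_sqrt hy'.ne')
    have h2 : HasDerivAt (fun y : ℝ => y ^ b) (b * y ^ (b-1)) y :=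
      Real.hasDerivAt_rpow_const (Or.inl hy'.ne')
    have h3 := (h1.mul h2).div_const b
    refine h3.congr_deriv ?_
    symm
    rw [Real.sq_sqrt hy'.le]
    have e1 : y ^ (b - 1/2) = y ^ b / Real.sqrt y := by
      rw [Real.rpow_sub hy', ← Real.sqrt_eq_rpow]
    have e2 : Real.exp (-(1/2 * y)) = Real.exp (-y/2) := by rw [show -(1/2 * y) = -y/2 by ring]
    rw [hφdef]
    simp only []
    rw [e1, e2]
    have hsy : Real.sqrt y ≠ 0 := (Real.sqrt_pos.2 hy').ne'
    field_simp
    ring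
  have hcont : ContinuousWithinAt (fun y : ℝ => gaussQ (Real.sqrt y) * y ^ b / b)
      (Set.Ici 0) 0 := by
    apply ContinuousWithinAt.div_const
    apply ContinuousWithinAt.mul
    · exact ((gaussQ_continuous.comp Real.continuous_sqrt).continuousAt).continuousWithinAt
    · exact (Real.continuousAt_rpow_const 0 b (Or.inr hb.le)).continuousWithinAt
  have hlim : Tendsto (fun y : ℝ => gaussQ (Real.sqrt y) * y ^ b / b) atTop (𝓝 0) := by
    apply squeeze_zero' (g := fun y : ℝ => (2/b) * (y ^ b * Real.exp (-(1/4) * y)))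
    · filter_upwards [eventually_ge_atTop (0:ℝ)] with y hy
      exact div_nonneg (mul_nonneg (gaussQ_nonneg _) (Real.rpow_nonneg hy _)) hb.le
    · filter_upwards [eventually_ge_atTop (0:ℝ)] with y hy
      calc gaussQ (Real.sqrt y) * y ^ b / b
          ≤ (2 * Real.exp (-(1/4) * y)) * y ^ b / b := by
            gcongr
            · exact gaussQ_sqrt_le hy
        _ = (2/b) * (y ^ b * Real.exp (-(1/4) * y)) := by ring
    · simpa using
        (tendsto_rpow_mul_exp_neg_mul_atTop_nhds_zero b (1/4) (by norm_num)).const_mul (2/b)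
  have hφint : IntegrableOn φ (Set.Ioi 0) := hIg.sub hint2
  have h0 := integral_Ioi_of_hasDerivAt_of_tendsto hcont hderiv hφint hlim
  rw [Real.sqrt_zero, Real.zero_rpow hb.ne', mul_zero, zero_div, sub_zero] at h0
  have hsplit : (∫ y in Set.Ioi (0:ℝ), φ y) =
      (∫ y in Set.Ioi (0:ℝ), gaussQ (Real.sqrt y) * y ^ (b-1)) -
        ∫ y in Set.Ioi (0:ℝ), c/(2*b) * (y ^ (b - 1/2) * Real.exp (-(1/2 * y))) :=
    integral_sub hIg hint2
  rw [hsplit, integral_const_mul, int_gamma (by linarith) (by norm_num)] at h0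
  linarith [h0]

lemma const_eq {a b : ℝ} (ha : 0 < a) (hb : 0 < b) :
    a ^ b / Real.Gamma b * ((Real.sqrt (2 * Real.pi))⁻¹ / (2*b) *
        ((1/2:ℝ) ^ (-(b - 1/2 + 1)) * Real.Gamma (b - 1/2 + 1))) =
      (1 / (2 * Real.sqrt Real.pi)) * (2 * a) ^ b *
        (Real.Gamma (1/2 + b) / Real.Gamma (1 + b)) := by
  have hΓ : 0 < Real.Gamma b := Real.Gamma_pos_of_pos hb
  rw [show b - 1/2 + 1 = 1/2 + b by ring, show (1:ℝ) + b = b + 1 by ring,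
    Real.Gamma_add_one hb.ne']
  have h12 : ((1:ℝ)/2) ^ (-(1/2 + b)) = Real.sqrt 2 * 2 ^ b := by
    rw [show ((1:ℝ)/2) = (2:ℝ)⁻¹ by norm_num, Real.inv_rpow (by norm_num : (0:ℝ) ≤ 2),
      Real.rpow_neg (by norm_num : (0:ℝ) ≤ 2), inv_inv,
      Real.rpow_add (by norm_num : (0:ℝ) < 2), show ((2:ℝ)⁻¹) = 1/2 by norm_num, ← Real.sqrt_eq_rpow]
  rw [h12, Real.sqrt_mul (by norm_num : (0:ℝ) ≤ 2) Real.pi,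
    Real.mul_rpow (by norm_num : (0:ℝ) ≤ 2) ha.le]
  have hs2 : Real.sqrt 2 ≠ 0 := by positivity
  have hsπ : Real.sqrt Real.pi ≠ 0 := by positivity
  field_simp

theorem stmt13 (a b : ℝ) (ha : 0 < a) (hb : 0 < b) :
    Tendsto
      (fun p : ℝ =>
        p ^ b * ∫ x in Set.Ioi (0 : ℝ),
          gaussQ (Real.sqrt (p * x)) * (a ^ b * x ^ (b - 1) * Real.exp (-(a * x)) / Real.Gamma b))
      atTop
      (nhds ((1 / (2 * Real.sqrt Real.pi)) * (2 * a) ^ b *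
        (Real.Gamma (1 / 2 + b) / Real.Gamma (1 + b)))) := by
  have hΓ : 0 < Real.Gamma b := Real.Gamma_pos_of_pos hb
  set G : ℝ → ℝ → ℝ := fun p y =>
    gaussQ (Real.sqrt y) * (a ^ b * y ^ (b - 1)) / Real.Gamma b * Real.exp (-(a / p * y))
    with hGdef
  set Fi : ℝ → ℝ := fun y => gaussQ (Real.sqrt y) * (a ^ b * y ^ (b - 1)) / Real.Gamma b
    with hFidef
  -- Step B : dominated convergence
  have hB : Tendsto (fun p : ℝ => ∫ y in Set.Ioi (0:ℝ), G p y) atTop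
      (𝓝 (∫ y in Set.Ioi (0:ℝ), Fi y)) := by
    refine tendsto_integral_filter_of_dominated_convergence
      (fun y => (2 * a ^ b / Real.Gamma b) * (y ^ (b-1) * Real.exp (-(1/4 * y)))) ?_ ?_ ?_ ?_
    · filter_upwards with p
      refine ContinuousOn.aestronglyMeasurable ?_ measurableSet_Ioi
      refine ContinuousOn.mul (ContinuousOn.div_const (ContinuousOn.mul ?_ ?_) _) ?_
      · exact (gaussQ_continuous.comp Real.continuous_sqrt).continuousOn
      · exact continuousOn_const.mul fun y hy =>
          (Real.continuousAt_rpow_const y (b-1) (Or.inl (ne_of_gt hy))).continuousWithinAt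
      · exact (Real.continuous_exp.comp (by fun_prop)).continuousOn
    · filter_upwards [eventually_ge_atTop (1:ℝ)] with p hp
      rw [ae_restrict_iff' measurableSet_Ioi]
      filter_upwards with y hy
      have hy' : (0:ℝ) < y := hy
      have hp' : (0:ℝ) < p := lt_of_lt_of_le one_pos hp
      have hGnn : 0 ≤ G p y := by
        rw [hGdef]
        have := gaussQ_nonneg (Real.sqrt y)
        positivity
      rw [Real.norm_eq_abs, abs_of_nonneg hGnn, hGdef]
      have hexp : Real.exp (-(a / p * y)) ≤ 1 := by
        rw [Real.exp_le_one_iff]  -- check name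
        have : 0 ≤ a / p * y := by positivity
        linarith
      calc gaussQ (Real.sqrt y) * (a ^ b * y ^ (b - 1)) / Real.Gamma b * Real.exp (-(a / p * y))
          ≤ gaussQ (Real.sqrt y) * (a ^ b * y ^ (b - 1)) / Real.Gamma b * 1 := by
            have hnn : 0 ≤ gaussQ (Real.sqrt y) * (a ^ b * y ^ (b - 1)) / Real.Gamma b := by
              have := gaussQ_nonneg (Real.sqrt y); positivity
            exact mul_le_mul_of_nonneg_left hexp hnn
        _ ≤ (2 * Real.exp (-(1/4 * y))) * (a ^ b * y ^ (b - 1)) / Real.Gamma b * 1 := by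
            have h1 : gaussQ (Real.sqrt y) ≤ 2 * Real.exp (-(1/4 * y)) := by
              have := gaussQ_sqrt_le hy'.le
              rwa [show -(1/4:ℝ) * y = -(1/4 * y) by ring] at this
            gcongr
        _ = (2 * a ^ b / Real.Gamma b) * (y ^ (b-1) * Real.exp (-(1/4 * y))) := by ring
    · exact (int_gamma_integrable (by linarith) (by norm_num)).const_mul _
    · refine Eventually.of_forall fun y => ?_
      have h1 : Tendsto (fun p : ℝ => -(a / p * y)) atTop (𝓝 0) := by
        have h := (tendsto_const_nhds (x := a) (f := atTop (α := ℝ))).div_atTop tendsto_id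
        simpa using (h.mul_const y).neg
      have h2 : Tendsto (fun p : ℝ => Real.exp (-(a / p * y))) atTop (𝓝 1) := by
        have := (Real.continuous_exp.continuousAt (x := (0:ℝ))).tendsto.comp h1
        simpa [Function.comp_def] using this
      have := tendsto_const_nhds (x := Fi y) (f := atTop (α := ℝ)) |>.mul h2
      simpa [hGdef, hFidef] using this
  -- value of the limit
  have hGinf : (∫ y in Set.Ioi (0:ℝ), Fi y) =
      a ^ b / Real.Gamma b * ∫ y in Set.Ioi (0:ℝ), gaussQ (Real.sqrt y) * y ^ (b-1) := by
    rw [← integral_const_mul]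
    refine setIntegral_congr_fun measurableSet_Ioi fun y _ => ?_
    simp only [hFidef]
    ring
  have hval : (∫ y in Set.Ioi (0:ℝ), Fi y) =
      (1 / (2 * Real.sqrt Real.pi)) * (2 * a) ^ b *
        (Real.Gamma (1/2 + b) / Real.Gamma (1 + b)) := by
    rw [hGinf, J_val hb, const_eq ha hb]
  rw [hval] at hB
  refine hB.congr' ?_
  filter_upwards [eventually_gt_atTop (0:ℝ)] with p hp
  set g : ℝ → ℝ := fun y =>
    gaussQ (Real.sqrt y) * (a ^ b * (y/p) ^ (b - 1) * Real.exp (-(a * (y/p))) / Real.Gamma b)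
    with hgdef
  have e1 : (∫ x in Set.Ioi (0:ℝ),
      gaussQ (Real.sqrt (p*x)) * (a ^ b * x ^ (b-1) * Real.exp (-(a*x)) / Real.Gamma b)) =
      p⁻¹ • ∫ y in Set.Ioi (0:ℝ), g y := by
    have h := integral_comp_mul_left_Ioi g 0 hp
    rw [mul_zero] at h
    rw [← h]
    refine setIntegral_congr_fun measurableSet_Ioi fun x _ => ?_
    rw [hgdef]
    simp only
    rw [mul_div_cancel_left₀ x hp.ne']
  have e2 : p ^ b * p⁻¹ = p ^ (b-1) := by
    rw [Real.rpow_sub hp, Real.rpow_one, div_eq_mul_inv]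
  rw [e1, smul_eq_mul, ← mul_assoc, e2, ← integral_const_mul]
  refine (setIntegral_congr_fun measurableSet_Ioi fun y hy => ?_).symm
  have hy' : (0:ℝ) < y := hy
  rw [hgdef]
  simp only
  rw [Real.div_rpow hy'.le hp.le, show a * (y/p) = a/p*y by ring, hGdef]
  have hpb : (0:ℝ) < p ^ (b-1) := Real.rpow_pos_of_pos hp _
  field_simp
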